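/- arXiv:math/9809100 — 4 statements merged into one kernel-verified Lean document; each statement's English description precedes it below -/
import Mathlib

section
/- There exists a unique sequence (e_i)_{i≥0} in F satisfying the Read relations. -/
set_option linter.unusedSectionVars false


/-- The real Banach space ℓ¹ of absolutely summable real sequences. -/
abbrev L1 : Type := lp (fun _ : ℕ => ℝ) 1

/-- The standard unit vectors of ℓ¹. -/
noncomputable def f (i : ℕ) : L1 := lp.single 1 i 1

/-- The dense subspace `F` of ℓ¹ spanned by the standard unit vectors. -/
noncomputable def F : Submodule ℝ L1 := Submodule.span ℝ (Set.range f)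

/-- `v n = n * (a n + b n)`; note `v 0 = 0`. -/
def v (a b : ℕ → ℕ) (n : ℕ) : ℕ := n * (a n + b n)

/-- The sequence `e` satisfies C. J. Read's relations (0), (A), (B), (C), (D). -/
noncomputable def ReadRelations (a b : ℕ → ℕ) (e : ℕ → L1) : Prop :=
  -- (0)
  e 0 = f 0 ∧
  -- (A)
  (∀ r n i : ℕ, 0 < r → r ≤ n → r * a n ≤ i → i ≤ r * a n + v a b (n - r) →
    f i = (a (n - r) : ℝ) • (e i - e (i - r * a n))) ∧
  -- (B), first case
  (∀ r n i : ℕ, 1 ≤ r → r < n → r * a n + v a b (n - r) < i → i < (r + 1) * a n →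
    f i = ((2 : ℝ) ^ ((((r : ℝ) + 1 / 2) * (a n : ℝ) - (i : ℝ)) / Real.sqrt (a n))) • e i) ∧
  -- (B), second case
  (∀ n i : ℕ, 1 ≤ n → v a b (n - 1) < i → i < a n →
    f i = ((2 : ℝ) ^ (((a n : ℝ) / 2 - (i : ℝ)) / Real.sqrt (a n))) • e i) ∧
  -- (C)
  (∀ r n i : ℕ, 1 ≤ r → r ≤ n → r * (a n + b n) ≤ i → i ≤ n * a n + r * b n →
    f i = e i - (b n : ℝ) • e (i - b n)) ∧
  -- (D)
  (∀ r n i : ℕ, r < n → n * a n + r * b n < i → i < (r + 1) * (a n + b n) →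
    f i = ((2 : ℝ) ^ ((((r : ℝ) + 1 / 2) * (b n : ℝ) - (i : ℝ)) / Real.sqrt (b n))) • e i)

/-! ### Auxiliary machinery -/

open Classical in
/-- The sequence `e` defined by recursion, following the Read relations. -/
noncomputable def E (a b : ℕ → ℕ) (i : ℕ) : L1 :=
  if hex : 0 < i ∧ ∃ n, i ≤ v a b n then
    if i < a (Nat.find hex.2) then
      ((2 : ℝ) ^ (((a (Nat.find hex.2) : ℝ) / 2 - (i : ℝ)) / Real.sqrt (a (Nat.find hex.2))))⁻¹ • f i
    else if i ≤ Nat.find hex.2 * a (Nat.find hex.2) then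
      if hlt : i ≤ (i / a (Nat.find hex.2)) * a (Nat.find hex.2) +
          v a b (Nat.find hex.2 - i / a (Nat.find hex.2)) ∧
          i - (i / a (Nat.find hex.2)) * a (Nat.find hex.2) < i then
        E a b (i - (i / a (Nat.find hex.2)) * a (Nat.find hex.2)) +
          ((a (Nat.find hex.2 - i / a (Nat.find hex.2)) : ℝ))⁻¹ • f i
      else
        ((2 : ℝ) ^ ((((i / a (Nat.find hex.2) : ℕ) + 1 / 2 : ℝ) * (a (Nat.find hex.2) : ℝ) - (i : ℝ)) /
          Real.sqrt (a (Nat.find hex.2))))⁻¹ • f i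
    else
      if hlt : (1 ≤ i / (a (Nat.find hex.2) + b (Nat.find hex.2)) ∧
          i ≤ Nat.find hex.2 * a (Nat.find hex.2) +
            (i / (a (Nat.find hex.2) + b (Nat.find hex.2))) * b (Nat.find hex.2)) ∧
          i - b (Nat.find hex.2) < i then
        f i + (b (Nat.find hex.2) : ℝ) • E a b (i - b (Nat.find hex.2))
      else
        ((2 : ℝ) ^ ((((i / (a (Nat.find hex.2) + b (Nat.find hex.2)) : ℕ) + 1 / 2 : ℝ) *
          (b (Nat.find hex.2) : ℝ) - (i : ℝ)) / Real.sqrt (b (Nat.find hex.2))))⁻¹ • f i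
  else f 0
  termination_by i
  decreasing_by
  · exact hlt.2
  · exact hlt.2

section Aux

variable {a b : ℕ → ℕ}
variable (ha0 : a 0 = 1) (hpos : 0 < a 1)
  (hab : ∀ n, 1 ≤ n → a n < b n)
  (hba : ∀ n, 1 ≤ n → b n < a (n + 1))
  (hga : ∀ n, 1 ≤ n → v a b (n - 1) < a n)
  (hgb : ∀ n, 1 ≤ n → n * a n < b n)

include ha0 hpos hab hba in
lemma apos : ∀ n, 0 < a n := by
  intro n
  induction n with
  | zero => simp [ha0]
  | succ k ih =>
    rcases Nat.eq_zero_or_pos k with hk | hk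
    · subst hk; exact hpos
    · exact lt_trans (lt_trans ih (hab k hk)) (hba k hk)

include ha0 hpos hab hba in
lemma bpos : ∀ n, 1 ≤ n → 0 < b n := fun n hn =>
  lt_trans (apos ha0 hpos hab hba n) (hab n hn)

include ha0 hpos hab hba in
lemma a_le_v : ∀ n, 1 ≤ n → a n ≤ v a b n := by
  intro n hn
  calc a n ≤ a n + b n := Nat.le_add_right _ _
    _ ≤ n * (a n + b n) := Nat.le_mul_of_pos_left _ hn

include ha0 hpos hab hba hga in
lemma vmono : StrictMono (v a b) := by
  apply strictMono_nat_of_lt_succ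
  intro n
  have h1 : v a b ((n + 1) - 1) < a (n + 1) := hga (n + 1) (Nat.le_add_left _ _)
  simpa using lt_of_lt_of_le h1 (a_le_v ha0 hpos hab hba (n + 1) (Nat.le_add_left _ _))

include ha0 hpos hab hba in
lemma exN (i : ℕ) : ∃ n, i ≤ v a b n := by
  refine ⟨i, ?_⟩
  calc i = i * 1 := (Nat.mul_one i).symm
    _ ≤ i * (a i + b i) := Nat.mul_le_mul_left i (le_trans (apos ha0 hpos hab hba i) (Nat.le_add_right _ _))

include ha0 hpos hab hba hga in
lemma find_eq {i n : ℕ} (hex : ∃ m, i ≤ v a b m) (hn : 1 ≤ n)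
    (h1 : v a b (n - 1) < i) (h2 : i ≤ v a b n) : Nat.find hex = n := by
  refine le_antisymm (Nat.find_le h2) ?_
  by_contra hlt
  push_neg at hlt
  have hfind := Nat.find_spec hex
  have : Nat.find hex ≤ n - 1 := by omega
  have := (vmono ha0 hpos hab hba hga).monotone this
  omega

include ha0 hpos hab hba hga hgb in
/-- The classification of indices `i ≥ 1` according to which relation applies. -/
lemma classify (i : ℕ) (hi : 0 < i) :
    (∃ n, 1 ≤ n ∧ v a b (n - 1) < i ∧ i < a n ∧ Nat.find (exN ha0 hpos hab hba i) = n) ∨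
    (∃ n r, 0 < r ∧ r ≤ n ∧ r * a n ≤ i ∧ i ≤ r * a n + v a b (n - r) ∧
      Nat.find (exN ha0 hpos hab hba i) = n ∧ i / a n = r) ∨
    (∃ n r, 1 ≤ r ∧ r < n ∧ r * a n + v a b (n - r) < i ∧ i < (r + 1) * a n ∧
      Nat.find (exN ha0 hpos hab hba i) = n ∧ i / a n = r) ∨
    (∃ n r, 1 ≤ r ∧ r ≤ n ∧ r * (a n + b n) ≤ i ∧ i ≤ n * a n + r * b n ∧
      Nat.find (exN ha0 hpos hab hba i) = n ∧ i / (a n + b n) = r) ∨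
    (∃ n r, r < n ∧ n * a n + r * b n < i ∧ i < (r + 1) * (a n + b n) ∧
      Nat.find (exN ha0 hpos hab hba i) = n ∧ i / (a n + b n) = r) := by
  set n := Nat.find (exN ha0 hpos hab hba i) with hn
  have hup : i ≤ v a b n := Nat.find_spec (exN ha0 hpos hab hba i)
  have hn1 : 1 ≤ n := by
    rcases Nat.eq_zero_or_pos n with h | h
    · exfalso; rw [h] at hup; simp [v] at hup; omega
    · exact h
  have hlow : v a b (n - 1) < i := by
    have := Nat.find_min (exN ha0 hpos hab hba i) (m := n - 1) (by omega)
    omega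
  have hapos := apos ha0 hpos hab hba
  have hbpos := bpos ha0 hpos hab hba n hn1
  by_cases hca : i < a n
  · exact Or.inl ⟨n, hn1, hlow, hca, rfl⟩
  push_neg at hca
  by_cases hcm : i ≤ n * a n
  · -- middle region
    set r := i / a n with hr
    have hr1 : 1 ≤ r := (Nat.one_le_div_iff (hapos n)).mpr hca
    have hrl : r * a n ≤ i := Nat.div_mul_le_self i (a n)
    have hru : i < (r + 1) * a n := by
      have h := (Nat.div_lt_iff_lt_mul (hapos n)).mp (Nat.lt_succ_self r)
      rw [Nat.succ_mul] at h
      rw [Nat.add_mul, one_mul]; omega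
    have hrn : r ≤ n := by
      by_contra h
      push_neg at h
      have : (n + 1) * a n ≤ r * a n := Nat.mul_le_mul_right _ (by omega)
      have : n * a n + a n ≤ r * a n := by rw [Nat.add_mul, one_mul] at this; omega
      have hl := hapos n
      omega
    by_cases hA : i ≤ r * a n + v a b (n - r)
    · exact Or.inr (Or.inl ⟨n, r, hr1, hrn, hrl, hA, rfl, rfl⟩)
    · push_neg at hA
      have hrltn : r < n := by
        rcases lt_or_eq_of_le hrn with h | h
        · exact h
        · exfalso
          have hnr : n - r = 0 := by omega
          have hv0 : v a b (n - r) = 0 := by rw [hnr]; simp [v]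
          have heq : r * a n = n * a n := by rw [h]
          have hl := hapos n
          omega
      exact Or.inr (Or.inr (Or.inl ⟨n, r, hr1, hrltn, hA, hru, rfl, rfl⟩))
  · -- right region
    push_neg at hcm
    set r := i / (a n + b n) with hr
    have habpos : 0 < a n + b n := by omega
    have hrl : r * (a n + b n) ≤ i := Nat.div_mul_le_self i _
    have hru : i < (r + 1) * (a n + b n) := by
      have h := (Nat.div_lt_iff_lt_mul habpos).mp (Nat.lt_succ_self r)
      rw [Nat.succ_mul] at h
      rw [Nat.add_mul, one_mul]; omega
    have hrn : r ≤ n := by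
      by_contra h
      push_neg at h
      have : (n + 1) * (a n + b n) ≤ r * (a n + b n) := Nat.mul_le_mul_right _ (by omega)
      have hv : v a b n = n * (a n + b n) := rfl
      rw [Nat.add_mul] at this
      omega
    by_cases hC : 1 ≤ r ∧ i ≤ n * a n + r * b n
    · exact Or.inr (Or.inr (Or.inr (Or.inl ⟨n, r, hC.1, hrn, hrl, hC.2, rfl, rfl⟩)))
    · push_neg at hC
      rcases Nat.eq_zero_or_pos r with hr0 | hr0
      · refine Or.inr (Or.inr (Or.inr (Or.inr ⟨n, r, by omega, ?_, hru, rfl, rfl⟩)))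
        rw [hr0]
        simpa using hcm
      · have hD : n * a n + r * b n < i := hC hr0
        have hrltn : r < n := by
          rcases lt_or_eq_of_le hrn with h | h
          · exact h
          · exfalso
            have hv : v a b n = n * (a n + b n) := rfl
            have h1 : n * (a n + b n) = n * a n + n * b n := by ring
            have h2 : r * b n = n * b n := by rw [h]
            omega
        exact Or.inr (Or.inr (Or.inr (Or.inr ⟨n, r, hrltn, hD, hru, rfl, rfl⟩)))

include ha0 hpos hab hba hga in
lemma E_B2 {n i : ℕ} (hn : 1 ≤ n) (h1 : v a b (n - 1) < i) (h2 : i < a n) :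
    E a b i = ((2 : ℝ) ^ (((a n : ℝ) / 2 - (i : ℝ)) / Real.sqrt (a n)))⁻¹ • f i := by
  have hi : 0 < i ∧ ∃ m, i ≤ v a b m := ⟨by omega, exN ha0 hpos hab hba i⟩
  have hN : Nat.find hi.2 = n :=
    find_eq ha0 hpos hab hba hga hi.2 hn h1
      (le_trans h2.le (a_le_v ha0 hpos hab hba n hn))
  rw [E, dif_pos hi]
  simp only [hN]
  rw [if_pos h2]

include ha0 hpos hab hba hga hgb in
lemma E_A {r n i : ℕ} (h1 : 0 < r) (h2 : r ≤ n) (h3 : r * a n ≤ i)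
    (h4 : i ≤ r * a n + v a b (n - r)) :
    E a b i = E a b (i - r * a n) + ((a (n - r) : ℝ))⁻¹ • f i := by
  have hapos := apos ha0 hpos hab hba
  have hn1 : 1 ≤ n := le_trans h1 h2
  have han : 0 < a n := hapos n
  have hran : 0 < r * a n := Nat.mul_pos h1 han
  have hi0 : 0 < i := by omega
  have hvmon := (vmono ha0 hpos hab hba hga).monotone
  have hru : i < r * a n + a n := by
    rcases lt_or_eq_of_le h2 with h | h
    · have hv : v a b (n - r) ≤ v a b (n - 1) := hvmon (by omega)
      have := hga n hn1
      omega
    · have h0 : n - r = 0 := by omega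
      rw [h0] at h4
      simp [v] at h4
      omega
  have key : i ≤ n * a n := by
    have hmul : (r + 1) * a n ≤ n * a n ∨ r = n := by
      rcases lt_or_eq_of_le h2 with h | h
      · exact Or.inl (Nat.mul_le_mul_right _ (by omega))
      · exact Or.inr h
    rcases hmul with h | h
    · have heq : (r + 1) * a n = r * a n + a n := by ring
      omega
    · have h0 : n - r = 0 := by omega
      rw [h0] at h4
      simp [v] at h4
      have heq : r * a n = n * a n := by rw [h]
      omega
  have hvl : v a b (n - 1) < i := by
    have hvn := hga n hn1
    have hle : a n ≤ r * a n := Nat.le_mul_of_pos_left _ h1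
    omega
  have hvu : i ≤ v a b n := by
    have hv : v a b n = n * (a n + b n) := rfl
    have hle : n * a n ≤ n * (a n + b n) := Nat.mul_le_mul_left n (Nat.le_add_right _ _)
    omega
  have hi : 0 < i ∧ ∃ m, i ≤ v a b m := ⟨hi0, exN ha0 hpos hab hba i⟩
  have hN : Nat.find hi.2 = n := find_eq ha0 hpos hab hba hga hi.2 hn1 hvl hvu
  have hr : i / a n = r := Nat.div_eq_of_lt_le h3 (by rw [Nat.add_mul, one_mul]; omega)
  rw [E, dif_pos hi]
  simp only [hN, hr]
  rw [if_neg (not_lt.mpr (le_trans (Nat.le_mul_of_pos_left _ h1) h3)), if_pos key,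
    dif_pos ⟨h4, Nat.sub_lt hi0 hran⟩]

include ha0 hpos hab hba hga hgb in
lemma E_B1 {r n i : ℕ} (h1 : 1 ≤ r) (h2 : r < n) (h3 : r * a n + v a b (n - r) < i)
    (h4 : i < (r + 1) * a n) :
    E a b i = ((2 : ℝ) ^ ((((r : ℝ) + 1 / 2) * (a n : ℝ) - (i : ℝ)) / Real.sqrt (a n)))⁻¹ • f i := by
  have hapos := apos ha0 hpos hab hba
  have hn1 : 1 ≤ n := by omega
  have han : 0 < a n := hapos n
  have hrl : r * a n ≤ i := by omega
  have hran : 0 < r * a n := Nat.mul_pos h1 han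
  have hi0 : 0 < i := by omega
  have key : i ≤ n * a n := by
    have hmul : (r + 1) * a n ≤ n * a n := Nat.mul_le_mul_right _ (by omega)
    omega
  have hvl : v a b (n - 1) < i := by
    have hvn := hga n hn1
    have hle : a n ≤ r * a n := Nat.le_mul_of_pos_left _ h1
    omega
  have hvu : i ≤ v a b n := by
    have hv : v a b n = n * (a n + b n) := rfl
    have hle : n * a n ≤ n * (a n + b n) := Nat.mul_le_mul_left n (Nat.le_add_right _ _)
    omega
  have hi : 0 < i ∧ ∃ m, i ≤ v a b m := ⟨hi0, exN ha0 hpos hab hba i⟩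
  have hN : Nat.find hi.2 = n := find_eq ha0 hpos hab hba hga hi.2 hn1 hvl hvu
  have hr : i / a n = r := Nat.div_eq_of_lt_le hrl h4
  rw [E, dif_pos hi]
  simp only [hN, hr]
  rw [if_neg (not_lt.mpr (le_trans (Nat.le_mul_of_pos_left _ h1) hrl)), if_pos key,
    dif_neg (fun h => absurd h.1 (not_le.mpr h3))]

include ha0 hpos hab hba hga hgb in
lemma E_C {r n i : ℕ} (h1 : 1 ≤ r) (h2 : r ≤ n) (h3 : r * (a n + b n) ≤ i)
    (h4 : i ≤ n * a n + r * b n) :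
    E a b i = f i + (b n : ℝ) • E a b (i - b n) := by
  have hapos := apos ha0 hpos hab hba
  have hn1 : 1 ≤ n := le_trans h1 h2
  have han : 0 < a n := hapos n
  have hbn : 0 < b n := bpos ha0 hpos hab hba n hn1
  have hgbn := hgb n hn1
  have habr : a n + b n ≤ r * (a n + b n) := Nat.le_mul_of_pos_left _ h1
  have hi0 : 0 < i := by omega
  have hvl : v a b (n - 1) < i := by
    have := hga n hn1
    omega
  have hvu : i ≤ v a b n := by
    have hv : v a b n = n * a n + n * b n := by simp [v]; ring
    have hle : r * b n ≤ n * b n := Nat.mul_le_mul_right _ h2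
    omega
  have hnan : n * a n < i := by omega
  have hi : 0 < i ∧ ∃ m, i ≤ v a b m := ⟨hi0, exN ha0 hpos hab hba i⟩
  have hN : Nat.find hi.2 = n := find_eq ha0 hpos hab hba hga hi.2 hn1 hvl hvu
  have hr : i / (a n + b n) = r := by
    refine Nat.div_eq_of_lt_le h3 ?_
    have heq : (r + 1) * (a n + b n) = r * (a n + b n) + a n + b n := by ring
    have heq2 : r * (a n + b n) = r * a n + r * b n := by ring
    have hle : n * a n ≤ r * a n + n * a n := by omega
    omega
  rw [E, dif_pos hi]
  simp only [hN, hr]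
  rw [if_neg (not_lt.mpr (by omega)), if_neg (not_le.mpr hnan),
    dif_pos ⟨⟨h1, h4⟩, Nat.sub_lt hi0 hbn⟩]

include ha0 hpos hab hba hga hgb in
lemma E_D {r n i : ℕ} (h2 : r < n) (h3 : n * a n + r * b n < i)
    (h4 : i < (r + 1) * (a n + b n)) :
    E a b i = ((2 : ℝ) ^ ((((r : ℝ) + 1 / 2) * (b n : ℝ) - (i : ℝ)) / Real.sqrt (b n)))⁻¹ • f i := by
  have hapos := apos ha0 hpos hab hba
  have hn1 : 1 ≤ n := by omega
  have han : 0 < a n := hapos n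
  have hbn : 0 < b n := bpos ha0 hpos hab hba n hn1
  have hnan : 0 < n * a n := Nat.mul_pos hn1 han
  have hi0 : 0 < i := by omega
  have hanle : a n ≤ n * a n := Nat.le_mul_of_pos_left _ hn1
  have hvl : v a b (n - 1) < i := by
    have := hga n hn1
    omega
  have hvu : i ≤ v a b n := by
    have hv : v a b n = n * (a n + b n) := rfl
    have hle : (r + 1) * (a n + b n) ≤ n * (a n + b n) := Nat.mul_le_mul_right _ (by omega)
    omega
  have hi : 0 < i ∧ ∃ m, i ≤ v a b m := ⟨hi0, exN ha0 hpos hab hba i⟩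
  have hN : Nat.find hi.2 = n := find_eq ha0 hpos hab hba hga hi.2 hn1 hvl hvu
  have hr : i / (a n + b n) = r := by
    refine Nat.div_eq_of_lt_le ?_ h4
    have heq : r * (a n + b n) = r * a n + r * b n := by ring
    have hle : r * a n ≤ n * a n := Nat.mul_le_mul_right _ h2.le
    omega
  rw [E, dif_pos hi]
  simp only [hN, hr]
  rw [if_neg (not_lt.mpr (by omega)), if_neg (not_le.mpr (by omega)),
    dif_neg (fun h => absurd h.1.2 (not_le.mpr h3))]

lemma E_zero : E a b 0 = f 0 := by
  rw [E, dif_neg (by simp)]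

include ha0 hpos hab hba hga hgb in
lemma E_read : ReadRelations a b (E a b) := by
  refine ⟨E_zero, ?_, ?_, ?_, ?_, ?_⟩
  · intro r n i h1 h2 h3 h4
    rw [E_A ha0 hpos hab hba hga hgb h1 h2 h3 h4, add_sub_cancel_left,
      smul_inv_smul₀ (Nat.cast_ne_zero.mpr (apos ha0 hpos hab hba (n - r)).ne')]
  · intro r n i h1 h2 h3 h4
    rw [E_B1 ha0 hpos hab hba hga hgb h1 h2 h3 h4,
      smul_inv_smul₀ (Real.rpow_pos_of_pos two_pos _).ne']
  · intro n i h1 h2 h3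
    rw [E_B2 ha0 hpos hab hba hga h1 h2 h3,
      smul_inv_smul₀ (Real.rpow_pos_of_pos two_pos _).ne']
  · intro r n i h1 h2 h3 h4
    rw [E_C ha0 hpos hab hba hga hgb h1 h2 h3 h4, add_sub_cancel_right]
  · intro r n i h1 h2 h3
    rw [E_D ha0 hpos hab hba hga hgb h1 h2 h3,
      smul_inv_smul₀ (Real.rpow_pos_of_pos two_pos _).ne']

lemma E_mem : ∀ i, E a b i ∈ F := by
  intro i
  induction i using Nat.strong_induction_on with
  | _ i IH =>
    have hf : ∀ j, f j ∈ F := fun j => Submodule.subset_span ⟨j, rfl⟩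
    rw [E]
    split_ifs with h1 h2 h3 h4 h5
    · exact Submodule.smul_mem _ _ (hf i)
    · exact Submodule.add_mem _ (IH _ h4.2) (Submodule.smul_mem _ _ (hf i))
    · exact Submodule.smul_mem _ _ (hf i)
    · exact Submodule.add_mem _ (hf i) (Submodule.smul_mem _ _ (IH _ h5.2))
    · exact Submodule.smul_mem _ _ (hf i)
    · exact hf 0

include ha0 hpos hab hba hga hgb in
lemma eq_E {e : ℕ → L1} (he : ReadRelations a b e) : ∀ i, e i = E a b i := by
  obtain ⟨h0, hA, hB1, hB2, hC, hD⟩ := he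
  have hapos := apos ha0 hpos hab hba
  intro i
  induction i using Nat.strong_induction_on with
  | _ i IH =>
  rcases Nat.eq_zero_or_pos i with hi | hi
  · subst hi
    rw [h0, E_zero]
  · rcases classify ha0 hpos hab hba hga hgb i hi with
      ⟨n, hn, h1, h2, _⟩ | ⟨n, r, h1, h2, h3, h4, _, _⟩ | ⟨n, r, h1, h2, h3, h4, _, _⟩ |
      ⟨n, r, h1, h2, h3, h4, _, _⟩ | ⟨n, r, h1, h2, h3, _, _⟩
    · rw [E_B2 ha0 hpos hab hba hga hn h1 h2, hB2 n i hn h1 h2,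
        inv_smul_smul₀ (Real.rpow_pos_of_pos two_pos _).ne']
    · have hrec : e (i - r * a n) = E a b (i - r * a n) :=
        IH _ (Nat.sub_lt hi (Nat.mul_pos h1 (hapos n)))
      rw [E_A ha0 hpos hab hba hga hgb h1 h2 h3 h4, ← hrec, hA r n i h1 h2 h3 h4,
        inv_smul_smul₀ (Nat.cast_ne_zero.mpr (hapos (n - r)).ne')]
      abel
    · rw [E_B1 ha0 hpos hab hba hga hgb h1 h2 h3 h4, hB1 r n i h1 h2 h3 h4,
        inv_smul_smul₀ (Real.rpow_pos_of_pos two_pos _).ne']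
    · have hn1 : 1 ≤ n := le_trans h1 h2
      have hrec : e (i - b n) = E a b (i - b n) :=
        IH _ (Nat.sub_lt hi (bpos ha0 hpos hab hba n hn1))
      rw [E_C ha0 hpos hab hba hga hgb h1 h2 h3 h4, ← hrec, hC r n i h1 h2 h3 h4]
      abel
    · rw [E_D ha0 hpos hab hba hga hgb h1 h2 h3, hD r n i h1 h2 h3,
        inv_smul_smul₀ (Real.rpow_pos_of_pos two_pos _).ne']

end Aux

/-- There exists a unique sequence `(eᵢ)` in `F` satisfying the Read relations. -/
theorem read_relations_existsUnique
(a b : ℕ → ℕ)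
    (ha0 : a 0 = 1)
    (hpos : 0 < a 1)
    (hab : ∀ n, 1 ≤ n → a n < b n)
    (hba : ∀ n, 1 ≤ n → b n < a (n + 1))
    (hga : ∀ n, 1 ≤ n → v a b (n - 1) < a n)
    (hgb : ∀ n, 1 ≤ n → n * a n < b n) :
    ∃! e : ℕ → L1, (∀ i, e i ∈ F) ∧ ReadRelations a b e := by
  refine ⟨E a b, ⟨E_mem, E_read ha0 hpos hab hba hga hgb⟩, ?_⟩
  intro y hy
  funext i
  exact eq_E ha0 hpos hab hba hga hgb hy.2 i
end

section
/- Suppose in addition that all the integers a_n and b_n (n ≥ 1) are even, and let (e_i)_{i≥0} satisfy the Read relations. Let S₂ : F → F be the linear map determined on the standard basis by S₂ f_i = f_i if i is even and S₂ f_i = 0 if i is odd. Then S₂ e_i = e_i for every even i and S₂ e_i = 0 for every odd i. -/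
lemma aux_scale (S₂ : L1 →ₗ[ℝ] L1) (i : ℕ) (x : L1) (c : ℝ) (hc : c ≠ 0)
    (hSi : S₂ (f i) = if Even i then f i else 0)
    (h : f i = c • x) :
    S₂ x = if Even i then x else 0 := by
  have hx : x = c⁻¹ • f i := by rw [h, smul_smul, inv_mul_cancel₀ hc, one_smul]
  rw [hx, map_smul, hSi]
  by_cases hi : Even i <;> simp [hi]

lemma aux_comb (S₂ : L1 →ₗ[ℝ] L1) (i j : ℕ) (x y : L1) (c d : ℝ)
    (hSi : S₂ (f i) = if Even i then f i else 0)
    (hSj : S₂ y = if Even j then y else 0)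
    (hpar : Even i ↔ Even j)
    (h : x = c • f i + d • y) :
    S₂ x = if Even i then x else 0 := by
  by_cases hi : Even i
  · simp [h, map_add, map_smul, hSi, hSj, if_pos hi, if_pos (hpar.mp hi)]
  · simp [h, map_add, map_smul, hSi, hSj, if_neg hi, if_neg (fun hj => hi (hpar.mpr hj))]

lemma aux_par (k i : ℕ) (hk : Even k) (hki : k ≤ i) : Even i ↔ Even (i - k) := by
  rw [Nat.even_sub hki]
  simp [hk]

/-- If all `aₙ` and `bₙ` are even and `(eᵢ)` satisfies the Read relations, then the
linear map `S₂` with `S₂ fᵢ = fᵢ` for even `i` and `S₂ fᵢ = 0` for odd `i` satisfies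
`S₂ eᵢ = eᵢ` for even `i` and `S₂ eᵢ = 0` for odd `i`. -/
theorem read_relations_even_projection
    (a b : ℕ → ℕ)
    (ha0 : a 0 = 1)
    (hpos : 0 < a 1)
    (hab : ∀ n, 1 ≤ n → a n < b n)
    (hba : ∀ n, 1 ≤ n → b n < a (n + 1))
    (hga : ∀ n, 1 ≤ n → v a b (n - 1) < a n)
    (hgb : ∀ n, 1 ≤ n → n * a n < b n)
    (heven : ∀ n, 1 ≤ n → Even (a n) ∧ Even (b n))
    (e : ℕ → L1) (heF : ∀ i, e i ∈ F) (he : ReadRelations a b e)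
    (S₂ : L1 →ₗ[ℝ] L1)
    (hS₂ : ∀ i : ℕ, S₂ (f i) = if Even i then f i else 0) :
    ∀ i : ℕ, S₂ (e i) = if Even i then e i else 0 := by
  obtain ⟨h0, hA, hB1, hB2, hC, hD⟩ := he
  have hapos : ∀ m, 0 < a m := by
    intro m
    induction m with
    | zero => simp [ha0]
    | succ k ih =>
      rcases Nat.eq_zero_or_pos k with hk | hk
      · simpa [hk] using hpos
      · exact lt_trans (lt_trans ih (hab k hk)) (hba k hk)
  have hbpos : ∀ m, 1 ≤ m → 0 < b m := fun m hm => lt_trans (hapos m) (hab m hm)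
  intro i
  induction i using Nat.strong_induction_on with
  | _ i IH =>
  rcases Nat.eq_zero_or_pos i with hi0 | hi1
  · subst hi0
    rw [h0, hS₂ 0]
  -- find the level n with v (n-1) < i ≤ v n
  have hex : ∃ n, i ≤ v a b n := by
    refine ⟨i, ?_⟩
    have h1 : 0 < a i + b i := by have := hapos i; omega
    calc i = i * 1 := (mul_one i).symm
    _ ≤ i * (a i + b i) := Nat.mul_le_mul_left i h1
  obtain ⟨n, hn, hmin⟩ : ∃ n, i ≤ v a b n ∧ ∀ m, m < n → ¬ i ≤ v a b m :=
    ⟨Nat.find hex, Nat.find_spec hex, fun m hm => Nat.find_min hex hm⟩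
  have hn1 : 1 ≤ n := by
    rcases Nat.eq_zero_or_pos n with h | h
    · exfalso
      rw [h] at hn
      simp [v] at hn
      omega
    · exact h
  have hlt : v a b (n - 1) < i := by
    have := hmin (n - 1) (by omega)
    omega
  have hAeven : Even (a n) := (heven n hn1).1
  have hBeven : Even (b n) := (heven n hn1).2
  by_cases hreg : i ≤ n * a n
  · -- region 1: v (n-1) < i ≤ n * a n
    obtain ⟨r, q, hq, hdm⟩ : ∃ r q, q < a n ∧ i = r * a n + q :=
      ⟨i / a n, i % a n, Nat.mod_lt i (hapos n),
        by rw [mul_comm]; exact (Nat.div_add_mod i (a n)).symm⟩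
    have hr_le : r * a n ≤ i := by omega
    have hr_lt : i < (r + 1) * a n := by rw [add_one_mul]; omega
    have hrn : r ≤ n := by
      by_contra hcon
      push_neg at hcon
      have : n * a n < r * a n := (Nat.mul_lt_mul_right (hapos n)).mpr hcon
      omega
    rcases Nat.eq_zero_or_pos r with hr0 | hr0
    · -- B second case
      have hia : i < a n := by rw [hr0] at hr_lt; simpa using hr_lt
      exact aux_scale S₂ i (e i)
        ((2 : ℝ) ^ (((a n : ℝ) / 2 - (i : ℝ)) / Real.sqrt (a n)))
        (ne_of_gt (Real.rpow_pos_of_pos two_pos _)) (hS₂ i) (hB2 n i hn1 hlt hia)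
    · by_cases hiA : i ≤ r * a n + v a b (n - r)
      · -- A case
        have hrel := hA r n i hr0 hrn hr_le hiA
        have hoff : 0 < r * a n := Nat.mul_pos hr0 (hapos n)
        have hji : i - r * a n < i := by omega
        have hc : ((a (n - r) : ℕ) : ℝ) ≠ 0 := by
          exact_mod_cast (hapos (n - r)).ne'
        have hx : e i = ((a (n - r) : ℕ) : ℝ)⁻¹ • f i + (1 : ℝ) • e (i - r * a n) := by
          rw [hrel, smul_smul, inv_mul_cancel₀ hc, one_smul, one_smul]
          abel
        exact aux_comb S₂ i (i - r * a n) (e i) (e (i - r * a n)) _ _ (hS₂ i)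
          (IH _ hji) (aux_par (r * a n) i (hAeven.mul_left r) hr_le) hx
      · -- B first case
        push_neg at hiA
        have hrn' : r < n := by
          rcases lt_or_eq_of_le hrn with h | h
          · exact h
          · exfalso
            rw [h] at hiA
            have h2 : n * a n < i := by simpa [v] using hiA
            omega
        exact aux_scale S₂ i (e i) _
          (ne_of_gt (Real.rpow_pos_of_pos two_pos _)) (hS₂ i)
          (hB1 r n i hr0 hrn' hiA hr_lt)
  · -- region 2: n * a n < i ≤ v n
    push_neg at hreg
    have hbn : 0 < b n := hbpos n hn1
    obtain ⟨j, hij⟩ : ∃ j, i = n * a n + 1 + j := ⟨i - n * a n - 1, by omega⟩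
    obtain ⟨r, q, hq, hdm⟩ : ∃ r q, q < b n ∧ j = r * b n + q :=
      ⟨j / b n, j % b n, Nat.mod_lt j hbn,
        by rw [mul_comm]; exact (Nat.div_add_mod j (b n)).symm⟩
    have h_lt1 : n * a n + r * b n < i := by omega
    have h_le2 : i ≤ n * a n + (r + 1) * b n := by rw [add_one_mul]; omega
    have hrn : r < n := by
      have hvn : v a b n = n * a n + n * b n := by rw [v, Nat.mul_add]
      have hjlt : r * b n < n * b n := by omega
      exact lt_of_mul_lt_mul_right hjlt (Nat.zero_le (b n))
    by_cases hiD : i < (r + 1) * (a n + b n)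
    · -- D case
      exact aux_scale S₂ i (e i) _
        (ne_of_gt (Real.rpow_pos_of_pos two_pos _)) (hS₂ i)
        (hD r n i hrn h_lt1 hiD)
    · -- C case with r+1
      push_neg at hiD
      have hrel := hC (r + 1) n i (by omega) (by omega) hiD h_le2
      have hble : b n ≤ i := by
        have h3 : a n + b n ≤ (r + 1) * (a n + b n) := Nat.le_mul_of_pos_left _ (by omega)
        omega
      have hji : i - b n < i := by omega
      have hx : e i = (1 : ℝ) • f i + ((b n : ℕ) : ℝ) • e (i - b n) := by
        rw [hrel, one_smul]
        abel
      exact aux_comb S₂ i (i - b n) (e i) (e (i - b n)) _ _ (hS₂ i)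
        (IH _ hji) (aux_par (b n) i hBeven hble) hx
end

section
/- Let m ≥ 1 be an integer and suppose in addition that m divides a_n and m divides b_n for every n ≥ 1, and let (e_i)_{i≥0} satisfy the Read relations. Let D : F → F be the linear map determined on the standard basis by D f_i = f_i if m divides i and D f_i = 0 otherwise. Then D e_i = e_i whenever m divides i and D e_i = 0 otherwise. -/
private lemma proj_scalar {p : Prop} [Decidable p] (D : L1 →ₗ[ℝ] L1) (c : ℝ) (hc : c ≠ 0)
    (x y : L1) (h : y = c • x) (hDy : D y = if p then y else 0) :
    D x = if p then x else 0 := by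
  have hx : x = c⁻¹ • y := by rw [h, smul_smul, inv_mul_cancel₀ hc, one_smul]
  rw [hx, map_smul, hDy]
  split <;> simp

private lemma proj_affine {p py pz : Prop} [Decidable p] [Decidable py] [Decidable pz]
    (hpy : py ↔ p) (hpz : pz ↔ p)
    (D : L1 →ₗ[ℝ] L1) (c : ℝ) (x y z : L1) (h : x = y + c • z)
    (hDy : D y = if py then y else 0) (hDz : D z = if pz then z else 0) :
    D x = if p then x else 0 := by
  rw [h, map_add, map_smul, hDy, hDz]
  by_cases hp : p
  · rw [if_pos (hpy.mpr hp), if_pos (hpz.mpr hp), if_pos hp]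
  · rw [if_neg (mt hpy.mp hp), if_neg (mt hpz.mp hp), if_neg hp, smul_zero, add_zero]

/-- If `m` divides all `aₙ` and `bₙ` and `(eᵢ)` satisfies the Read relations, then the
linear map `D` with `D fᵢ = fᵢ` when `m ∣ i` and `D fᵢ = 0` otherwise satisfies
`D eᵢ = eᵢ` when `m ∣ i` and `D eᵢ = 0` otherwise. -/
theorem read_relations_divisibility_projection (m : ℕ) (hm : 1 ≤ m)
    (a b : ℕ → ℕ)
    (ha0 : a 0 = 1)
    (hpos : 0 < a 1)
    (hab : ∀ n, 1 ≤ n → a n < b n)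
    (hba : ∀ n, 1 ≤ n → b n < a (n + 1))
    (hga : ∀ n, 1 ≤ n → v a b (n - 1) < a n)
    (hgb : ∀ n, 1 ≤ n → n * a n < b n)
    (hdvd : ∀ n, 1 ≤ n → m ∣ a n ∧ m ∣ b n)
    (e : ℕ → L1) (heF : ∀ i, e i ∈ F) (he : ReadRelations a b e)
    (D : L1 →ₗ[ℝ] L1)
    (hD : ∀ i : ℕ, D (f i) = if m ∣ i then f i else 0) :
    ∀ i : ℕ, D (e i) = if m ∣ i then e i else 0 := by
  obtain ⟨h0, hA, hB1, hB2, hC, hDD⟩ := he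
  have hapos : ∀ n, 0 < a n := by
    intro n
    induction n with
    | zero => omega
    | succ k ih =>
      rcases Nat.eq_zero_or_pos k with rfl | hk
      · exact hpos
      · exact lt_trans ih (lt_trans (hab k hk) (hba k hk))
  have hbpos : ∀ n, 1 ≤ n → 0 < b n := fun n hn => lt_trans (hapos n) (hab n hn)
  intro i
  induction i using Nat.strong_induction_on with
  | _ i IH =>
  rcases Nat.eq_zero_or_pos i with rfl | hi
  · rw [h0, hD 0]
  have hex : ∃ n, i ≤ v a b n := by
    refine ⟨i, ?_⟩
    simp only [v]
    exact Nat.le_mul_of_pos_right i (by have := hapos i; omega)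
  set n := Nat.find hex with hn_def
  have hn_le : i ≤ v a b n := Nat.find_spec hex
  have hn_min : ∀ k, k < n → v a b k < i := fun k hk => by
    have := Nat.find_min hex hk; omega
  have hn1 : 1 ≤ n := by
    by_contra h
    have hn0 : n = 0 := by omega
    rw [hn0] at hn_le
    simp [v] at hn_le
    omega
  have hvlt : v a b (n - 1) < i := hn_min (n - 1) (by omega)
  by_cases hia : i < a n
  · -- case (B), second
    exact proj_scalar D _ (by positivity) _ _ (hB2 n i hn1 hvlt hia) (hD i)
  push_neg at hia
  by_cases hina : i ≤ n * a n
  · -- cases (A) and (B) first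
    set r := i / a n with hr_def
    have hr_mul : r * a n ≤ i := Nat.div_mul_le_self i (a n)
    have hr_lt : i < (r + 1) * a n := (Nat.div_lt_iff_lt_mul (hapos n)).mp (Nat.lt_succ_self r)
    have hr1 : 1 ≤ r := (Nat.one_le_div_iff (hapos n)).mpr hia
    have hrn : r ≤ n := by
      have h1 : r * a n ≤ n * a n := le_trans hr_mul hina
      exact Nat.le_of_mul_le_mul_right h1 (hapos n)
    by_cases hiA : i ≤ r * a n + v a b (n - r)
    · -- (A)
      have hrel := hA r n i hr1 hrn hr_mul hiA
      set j := i - r * a n with hj_def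
      have hra_pos : 0 < r * a n := Nat.mul_pos hr1 (hapos n)
      have hj_lt : j < i := by omega
      have hdvd_ra : m ∣ r * a n := Dvd.dvd.mul_left (hdvd n hn1).1 r
      have hiff : m ∣ j ↔ m ∣ i := by
        constructor
        · intro h
          have hji : j + r * a n = i := by omega
          rw [← hji]
          exact Nat.dvd_add h hdvd_ra
        · intro h
          exact Nat.dvd_sub h hdvd_ra
      have hAne : (a (n - r) : ℝ) ≠ 0 := Nat.cast_ne_zero.mpr (hapos (n - r)).ne'
      have heq : e i = e j + ((a (n - r) : ℝ))⁻¹ • f i := by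
        rw [hrel, smul_smul, inv_mul_cancel₀ hAne, one_smul]
        abel
      exact proj_affine hiff Iff.rfl D _ _ _ _ heq (IH j hj_lt) (hD i)
    · -- (B) first
      push_neg at hiA
      have hr_lt_n : r < n := by
        by_contra h
        have hrn' : r = n := le_antisymm hrn (not_lt.mp h)
        rw [hrn'] at hiA
        simp [v] at hiA
        omega
      exact proj_scalar D _ (by positivity) _ _ (hB1 r n i hr1 hr_lt_n hiA hr_lt) (hD i)
  · -- cases (C) and (D)
    push_neg at hina
    have hABpos : 0 < a n + b n := by have := hapos n; omega
    set s := i / (a n + b n) with hs_def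
    have hs_mul : s * (a n + b n) ≤ i := Nat.div_mul_le_self i _
    have hs_lt : i < (s + 1) * (a n + b n) :=
      (Nat.div_lt_iff_lt_mul hABpos).mp (Nat.lt_succ_self s)
    have hvn : v a b n = n * (a n + b n) := rfl
    have hsn : s ≤ n := by
      have h1 : s * (a n + b n) ≤ n * (a n + b n) := le_trans hs_mul (by omega)
      exact Nat.le_of_mul_le_mul_right h1 hABpos
    by_cases hiC : i ≤ n * a n + s * b n
    · -- (C)
      have hs1 : 1 ≤ s := by
        by_contra h
        have hs0 : s = 0 := Nat.lt_one_iff.mp (not_le.mp h)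
        rw [hs0] at hiC
        simp at hiC
        omega
      have hrel := hC s n i hs1 hsn hs_mul hiC
      set j := i - b n with hj_def
      have hbn_le : b n ≤ i :=
        le_trans (le_trans (Nat.le_add_left _ _) (Nat.le_mul_of_pos_left _ hs1)) hs_mul
      have hj_lt : j < i := by have := hbpos n hn1; omega
      have hdvd_b : m ∣ b n := (hdvd n hn1).2
      have hiff : m ∣ j ↔ m ∣ i := by
        constructor
        · intro h
          have hji : j + b n = i := by omega
          rw [← hji]
          exact Nat.dvd_add h hdvd_b
        · intro h
          exact Nat.dvd_sub h hdvd_b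
      have heq : e i = f i + (b n : ℝ) • e j := by
        rw [hrel]; abel
      exact proj_affine Iff.rfl hiff D _ _ _ _ heq (hD i) (IH j hj_lt)
    · -- (D)
      push_neg at hiC
      have hs_lt_n : s < n := by
        by_contra h
        have hsn' : s = n := le_antisymm hsn (not_lt.mp h)
        rw [hsn'] at hiC
        rw [hvn, Nat.mul_add] at hn_le
        omega
      exact proj_scalar D _ (by positivity) _ _ (hDD s n i hs_lt_n hiC hs_lt) (hD i)
end

section
/- Let m ≥ 1 be an integer and suppose in addition that m divides a_n and m divides b_n for every n ≥ 1, and let (e_i)_{i≥0} satisfy the Read relations. Let D_m : ℓ¹ → ℓ¹ be the continuous linear operator with D_m f_i = f_i if m divides i and D_m f_i = 0 otherwise, and let T : ℓ¹ → ℓ¹ be a continuous linear operator with T e_i = e_{i+1} for all i ≥ 0. Then T^m ∘ D_m = D_m ∘ T^m on all of ℓ¹. -/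
set_option maxHeartbeats 1000000
set_option synthInstance.maxHeartbeats 1000000

/-- If `m` divides all `aₙ` and `bₙ`, `(eᵢ)` satisfies the Read relations, `Dₘ` is the
continuous operator with `Dₘ fᵢ = fᵢ` when `m ∣ i` and `Dₘ fᵢ = 0` otherwise, and `T`
is a continuous operator with `T eᵢ = e_{i+1}`, then `Tᵐ ∘ Dₘ = Dₘ ∘ Tᵐ`. -/
theorem read_operator_pow_commutes_with_projection (m : ℕ) (hm : 1 ≤ m)
    (a b : ℕ → ℕ)
    (ha0 : a 0 = 1)
    (hpos : 0 < a 1)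
    (hab : ∀ n, 1 ≤ n → a n < b n)
    (hba : ∀ n, 1 ≤ n → b n < a (n + 1))
    (hga : ∀ n, 1 ≤ n → v a b (n - 1) < a n)
    (hgb : ∀ n, 1 ≤ n → n * a n < b n)
    (hdvd : ∀ n, 1 ≤ n → m ∣ a n ∧ m ∣ b n)
    (e : ℕ → L1) (heF : ∀ i, e i ∈ F) (he : ReadRelations a b e)
    (Dm : L1 →L[ℝ] L1)
    (hDm : ∀ i : ℕ, Dm (f i) = if m ∣ i then f i else 0)
    (T : L1 →L[ℝ] L1)
    (hT : ∀ i : ℕ, T (e i) = e (i + 1)) :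
    (T ^ m).comp Dm = Dm.comp (T ^ m) := by
  obtain ⟨he0, heA, heB1, heB2, heC, heD⟩ := he
  -- positivity of a and b
  have hapos : ∀ n, 0 < a n := by
    intro n
    rcases Nat.eq_zero_or_pos n with rfl | hn
    · simp [ha0]
    · induction n, hn using Nat.le_induction with
      | base => exact hpos
      | succ k hk ih =>
        have h1 := hab k hk
        have h2 := hba k hk
        omega
  have hbpos : ∀ n, 1 ≤ n → 0 < b n := fun n hn => lt_trans (hapos n) (hab n hn)
  -- the covering lemma: every i ≥ 1 is in the scope of one of the relations
  have hcover : ∀ i : ℕ, 1 ≤ i →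
      (∃ r n, 0 < r ∧ r ≤ n ∧ r * a n ≤ i ∧ i ≤ r * a n + v a b (n - r)) ∨
      (∃ r n, 1 ≤ r ∧ r < n ∧ r * a n + v a b (n - r) < i ∧ i < (r + 1) * a n) ∨
      (∃ n, 1 ≤ n ∧ v a b (n - 1) < i ∧ i < a n) ∨
      (∃ r n, 1 ≤ r ∧ r ≤ n ∧ r * (a n + b n) ≤ i ∧ i ≤ n * a n + r * b n) ∨
      (∃ r n, r < n ∧ n * a n + r * b n < i ∧ i < (r + 1) * (a n + b n)) := by
    intro i hi
    have hex : ∃ n, i ≤ v a b n := by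
      refine ⟨i, ?_⟩
      have h1 : 0 < a i := hapos i
      have : i * 1 ≤ i * (a i + b i) := Nat.mul_le_mul_left i (by omega)
      simpa [v] using this
    classical
    obtain ⟨n, hvn, hmin⟩ : ∃ n, i ≤ v a b n ∧ ∀ k, k < n → ¬ i ≤ v a b k :=
      ⟨Nat.find hex, Nat.find_spec hex, fun k hk => Nat.find_min hex hk⟩
    have hn1 : 1 ≤ n := by
      rcases Nat.eq_zero_or_pos n with h0 | h
      · exfalso
        rw [h0] at hvn
        simp [v] at hvn
        omega
      · exact h
    have hvlt : v a b (n - 1) < i := by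
      have h := hmin (n - 1) (by omega)
      omega
    have hApos : 0 < a n := hapos n
    have hBpos : 0 < b n := hbpos n hn1
    have hgan := hga n hn1
    have hgbn := hgb n hn1
    by_cases h1 : i < a n
    · exact Or.inr (Or.inr (Or.inl ⟨n, hn1, hvlt, h1⟩))
    push_neg at h1
    by_cases h2 : i ≤ n * a n
    · -- A or B1
      obtain ⟨r, hrle, hrlt⟩ : ∃ r, r * a n ≤ i ∧ i < r * a n + a n := by
        refine ⟨i / a n, Nat.div_mul_le_self i (a n), ?_⟩
        have hk := Nat.div_add_mod i (a n)
        have hm2 := Nat.mod_lt i hApos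
        have : i / a n * a n = a n * (i / a n) := Nat.mul_comm _ _
        omega
      have hr1 : 1 ≤ r := by
        rcases Nat.eq_zero_or_pos r with h0 | h
        · exfalso; rw [h0] at hrlt; simp at hrlt; omega
        · exact h
      have hrn : r ≤ n := by
        have : r * a n ≤ n * a n := le_trans hrle h2
        exact Nat.le_of_mul_le_mul_right this hApos
      by_cases h3 : i ≤ r * a n + v a b (n - r)
      · exact Or.inl ⟨r, n, hr1, hrn, hrle, h3⟩
      · push_neg at h3
        have hrn' : r < n := by
          rcases lt_or_eq_of_le hrn with h | h
          · exact h
          · exfalso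
            rw [h] at h3
            simp [v] at h3
            omega
        have hrlt' : i < (r + 1) * a n := by rw [add_one_mul]; omega
        exact Or.inr (Or.inl ⟨r, n, hr1, hrn', h3, hrlt'⟩)
    · -- C or D
      push_neg at h2
      obtain ⟨r, hrle, hrlt⟩ : ∃ r, r * b n ≤ i - n * a n - 1 ∧
          i - n * a n - 1 < r * b n + b n := by
        refine ⟨(i - n * a n - 1) / b n, Nat.div_mul_le_self _ (b n), ?_⟩
        have hk := Nat.div_add_mod (i - n * a n - 1) (b n)
        have hm2 := Nat.mod_lt (i - n * a n - 1) hBpos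
        have : (i - n * a n - 1) / b n * b n = b n * ((i - n * a n - 1) / b n) :=
          Nat.mul_comm _ _
        omega
      have hrlo : n * a n + r * b n < i := by omega
      have hrhi : i ≤ n * a n + (r + 1) * b n := by rw [add_one_mul]; omega
      have hvn' : i ≤ n * a n + n * b n := by
        have : v a b n = n * a n + n * b n := by rw [v]; ring
        omega
      have hrn : r < n := by
        have h4 : r * b n < n * b n := by omega
        exact Nat.lt_of_mul_lt_mul_right h4
      by_cases h3 : i < (r + 1) * (a n + b n)
      · exact Or.inr (Or.inr (Or.inr (Or.inr ⟨r, n, hrn, hrlo, h3⟩)))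
      · push_neg at h3
        exact Or.inr (Or.inr (Or.inr (Or.inl ⟨r + 1, n, by omega, by omega, h3, hrhi⟩)))
  -- every f i lies in the span of the e's
  have hfspan : ∀ i, f i ∈ Submodule.span ℝ (Set.range e) := by
    intro i
    have hmem : ∀ j, e j ∈ Submodule.span ℝ (Set.range e) :=
      fun j => Submodule.subset_span ⟨j, rfl⟩
    rcases Nat.eq_zero_or_pos i with rfl | hi
    · exact he0 ▸ hmem 0
    rcases hcover i hi with ⟨r, n, h1, h2, h3, h4⟩ | ⟨r, n, h1, h2, h3, h4⟩ |
      ⟨n, h1, h2, h3⟩ | ⟨r, n, h1, h2, h3, h4⟩ | ⟨r, n, h1, h2, h3⟩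
    · rw [heA r n i h1 h2 h3 h4]
      exact Submodule.smul_mem _ _ (Submodule.sub_mem _ (hmem _) (hmem _))
    · rw [heB1 r n i h1 h2 h3 h4]
      exact Submodule.smul_mem _ _ (hmem _)
    · rw [heB2 n i h1 h2 h3]
      exact Submodule.smul_mem _ _ (hmem _)
    · rw [heC r n i h1 h2 h3 h4]
      exact Submodule.sub_mem _ (hmem _) (Submodule.smul_mem _ _ (hmem _))
    · rw [heD r n i h1 h2 h3]
      exact Submodule.smul_mem _ _ (hmem _)
  -- F is dense
  have hdenseF : Dense (F : Set L1) := by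
    intro x
    haveI : Fact ((1 : ENNReal) ≤ 1) := ⟨le_refl _⟩
    have hsum := lp.hasSum_single (E := fun _ : ℕ => ℝ) (p := 1) (by norm_num) x
    refine mem_closure_of_tendsto hsum ?_
    filter_upwards with s
    refine Submodule.sum_mem _ fun i _ => ?_
    have : lp.single (E := fun _ : ℕ => ℝ) 1 i (x i) = (x i) • f i := by
      rw [f, ← lp.single_smul]
      norm_num
    rw [this]
    exact Submodule.smul_mem _ _ (Submodule.subset_span ⟨i, rfl⟩)
  have hdense : Dense ((Submodule.span ℝ (Set.range e) : Submodule ℝ L1) : Set L1) := by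
    refine hdenseF.mono ?_
    rw [F]
    have hle : Submodule.span ℝ (Set.range f) ≤ Submodule.span ℝ (Set.range e) := by
      apply Submodule.span_le.2
      rintro y ⟨i, rfl⟩
      exact hfspan i
    exact fun x hx => hle hx
  -- D m acts diagonally on the e's
  have hscal : ∀ (i : ℕ) (c : ℝ), c ≠ 0 → f i = c • e i →
      Dm (e i) = if m ∣ i then e i else 0 := by
    intro i c hc hfe
    have hei : e i = c⁻¹ • f i := by
      rw [hfe, smul_smul, inv_mul_cancel₀ hc, one_smul]
    rw [hei, map_smul, hDm]
    split_ifs with h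
    · rfl
    · simp
  have hDme : ∀ i, Dm (e i) = if m ∣ i then e i else 0 := by
    intro i
    induction i using Nat.strong_induction_on with
    | _ i IH =>
    rcases Nat.eq_zero_or_pos i with rfl | hi
    · rw [he0]
      exact hDm 0
    rcases hcover i hi with ⟨r, n, h1, h2, h3, h4⟩ | ⟨r, n, h1, h2, h3, h4⟩ |
      ⟨n, h1, h2, h3⟩ | ⟨r, n, h1, h2, h3, h4⟩ | ⟨r, n, h1, h2, h3⟩
    · -- case A
      have hn1 : 1 ≤ n := le_trans h1 h2
      have hfa := heA r n i h1 h2 h3 h4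
      have hcpos : (0 : ℝ) < (a (n - r) : ℝ) := by exact_mod_cast hapos (n - r)
      have hc : (a (n - r) : ℝ) ≠ 0 := ne_of_gt hcpos
      have hei : e i = ((a (n - r) : ℝ))⁻¹ • f i + e (i - r * a n) := by
        rw [hfa, smul_smul, inv_mul_cancel₀ hc, one_smul]
        abel
      have hlt : i - r * a n < i := by
        have : 0 < r * a n := Nat.mul_pos h1 (hapos n)
        omega
      have hd : m ∣ r * a n := Dvd.dvd.mul_left (hdvd n hn1).1 r
      rw [hei, map_add, map_smul, hDm, IH _ hlt]
      by_cases hmi : m ∣ i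
      · have h' : m ∣ i - r * a n := Nat.dvd_sub hmi hd
        simp only [if_pos hmi, if_pos h']
      · have h' : ¬ m ∣ i - r * a n := by
          intro h
          exact hmi (by have := Nat.dvd_add h hd; rwa [Nat.sub_add_cancel h3] at this)
        simp only [if_neg hmi, if_neg h', smul_zero, add_zero]
    · -- case B1
      refine hscal i _ ?_ (heB1 r n i h1 h2 h3 h4)
      positivity
    · -- case B2
      refine hscal i _ ?_ (heB2 n i h1 h2 h3)
      positivity
    · -- case C
      have hn1 : 1 ≤ n := le_trans h1 h2
      have hfc := heC r n i h1 h2 h3 h4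
      have hble : b n ≤ i := by
        have : 1 * (a n + b n) ≤ r * (a n + b n) := Nat.mul_le_mul_right _ h1
        omega
      have hei : e i = f i + (b n : ℝ) • e (i - b n) := by
        rw [hfc]; abel
      have hlt : i - b n < i := by
        have := hbpos n hn1
        omega
      have hd : m ∣ b n := (hdvd n hn1).2
      rw [hei, map_add, map_smul, hDm, IH _ hlt]
      by_cases hmi : m ∣ i
      · have h' : m ∣ i - b n := Nat.dvd_sub hmi hd
        simp only [if_pos hmi, if_pos h']
      · have h' : ¬ m ∣ i - b n := by
          intro h
          exact hmi (by have := Nat.dvd_add h hd; rwa [Nat.sub_add_cancel hble] at this)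
        simp only [if_neg hmi, if_neg h', smul_zero, add_zero]
    · -- case D
      refine hscal i _ ?_ (heD r n i h1 h2 h3)
      positivity
  -- iterates of T on the e's
  have hTm : ∀ (k i : ℕ), (T ^ k) (e i) = e (i + k) := by
    intro k
    induction k with
    | zero => intro i; simp
    | succ k ih =>
      intro i
      rw [pow_succ', ContinuousLinearMap.mul_apply, ih, hT, ← add_assoc]
  -- conclude
  refine ContinuousLinearMap.ext_on hdense ?_
  rintro x ⟨i, rfl⟩
  simp only [ContinuousLinearMap.comp_apply]
  rw [hDme i, hTm m i, hDme (i + m)]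
  have hiff : m ∣ i + m ↔ m ∣ i := Nat.dvd_add_self_right
  rw [if_congr hiff rfl rfl]
  split_ifs with h
  · rw [hTm]
  · rw [map_zero]
end
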